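/- There is a 2-coloring of the natural numbers ℕ (with addition) such that no infinite subsemigroup of (ℕ,+) is almost-monochromatic. -/

import Mathlib

/-- There is a 2-coloring of `ℕ` such that no infinite subsemigroup of `(ℕ, +)`
is almost-monochromatic. -/
theorem nat_coloring_no_almostMono_subsemigroup :
    ∃ c : ℕ → Fin 2, ∀ T : Set ℕ, T.Nonempty →
      (∀ a ∈ T, ∀ b ∈ T, a + b ∈ T) → T.Infinite →
      ¬ ∃ col : Fin 2, {x ∈ T | c x ≠ col}.Finite := by
  refine ⟨fun n => ⟨Nat.log 2 n % 2, Nat.mod_lt _ (by norm_num)⟩, ?_⟩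
  rintro T _ hT hinf ⟨col, hfin⟩
  -- T contains a positive element a
  obtain ⟨a, haT, ha⟩ : ∃ a ∈ T, 1 ≤ a := by
    obtain ⟨a, haT, ha⟩ := hinf.exists_gt 0
    exact ⟨a, haT, ha⟩
  -- all positive multiples of a are in T
  have hmul : ∀ n : ℕ, 1 ≤ n → n * a ∈ T := by
    intro n hn
    induction n with
    | zero => omega
    | succ m ih =>
      rcases Nat.eq_zero_or_pos m with h | h
      · simpa [h]
      · have h1 : m * a + a ∈ T := hT _ (ih h) _ haT
        simpa [Nat.succ_mul] using h1
  -- for every k with a ≤ 2^k, T hits the block with log = k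
  have key : ∀ k, a ≤ 2 ^ k → ∃ x ∈ T, Nat.log 2 x = k := by
    intro k hk
    obtain ⟨q, r, hdm, hq0⟩ : ∃ q r, a * q + r = 2 ^ k ∧ q = 2 ^ k / a ∧ r = 2 ^ k % a :=
      ⟨2 ^ k / a, 2 ^ k % a, Nat.div_add_mod _ _, rfl, rfl⟩
    obtain ⟨hq0, hr0⟩ := hq0
    have hr : r < a := hr0 ▸ Nat.mod_lt _ ha
    have hpow : (2 : ℕ) ^ (k + 1) = 2 ^ k + 2 ^ k := by ring
    rcases Nat.eq_zero_or_pos r with hrz | hrz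
    · have hq : 0 < q := by
        rcases Nat.eq_zero_or_pos q with h | h
        · exfalso; rw [h] at hdm; omega
        · exact h
      refine ⟨q * a, hmul _ hq, ?_⟩
      have hx : q * a = 2 ^ k := by rw [mul_comm]; omega
      rw [hx, Nat.log_pow (by norm_num)]
    · refine ⟨(q + 1) * a, hmul _ (by omega), ?_⟩
      have hexp : (q + 1) * a = a * q + a := by ring
      apply Nat.log_eq_of_pow_le_of_lt_pow <;> omega
  -- finite exceptional set is bounded
  obtain ⟨N, hN⟩ := hfin.bddAbove
  -- choose k of the right parity with 2^k large
  set M := max a N + 1 with hM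
  have hMlt : M < 2 ^ M := Nat.lt_two_pow_self (n := M)
  have hcol : (col : ℕ) < 2 := col.is_lt
  obtain ⟨k, hMk, hkpar⟩ : ∃ k, M ≤ k ∧ k % 2 ≠ (col : ℕ) := by
    by_cases h : M % 2 = (col : ℕ)
    · exact ⟨M + 1, by omega, by omega⟩
    · exact ⟨M, le_refl _, h⟩
  have h2k : M < 2 ^ k := lt_of_lt_of_le hMlt (Nat.pow_le_pow_right (by norm_num) hMk)
  obtain ⟨x, hxT, hxlog⟩ := key k (by omega)
  have hx2k : 2 ^ k ≤ x := by
    rw [← hxlog]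
    exact Nat.pow_log_le_self 2 (by rintro rfl; simp [Nat.log_zero_right] at hxlog; omega)
  have hxS : x ∈ {x ∈ T | (⟨Nat.log 2 x % 2, Nat.mod_lt _ (by norm_num)⟩ : Fin 2) ≠ col} := by
    refine ⟨hxT, ?_⟩
    intro hcontra
    apply hkpar
    rw [← hxlog]
    exact congrArg Fin.val hcontra
  have := hN hxS
  omega
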